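/- There exists n_0 such that for all n ≥ n_0, every flip distribution D on {0,1,…,n}, and every integer d with 1 ≤ d ≤ d_0, it holds that h(d) ≤ (1 + 1/ln n)·(p_1 + p_{n−1})·d/n. -/

import Mathlib

open scoped BigOperators ENNReal Classical

/-- The search space `{0,1}^n`. -/
abbrev Point (n : ℕ) := Fin n → Bool

/-- `OM x` is the number of one-bits of `x`. -/
def OM {n : ℕ} (x : Point n) : ℕ := (Finset.univ.filter fun i => x i = true).card

/-- Hamming distance between two points. -/
def hamming {n : ℕ} (x y : Point n) : ℕ := (Finset.univ.filter fun i => x i ≠ y i).card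

/-- A flip distribution `D = (p_0, …, p_n)` on `{0,…,n}`. -/
structure FlipDist (n : ℕ) where
  p : ℕ → ℝ
  nonneg : ∀ k, 0 ≤ p k
  sum_eq : ∑ k ∈ Finset.range (n+1), p k = 1
  zero_of_gt : ∀ k, n < k → p k = 0

/-- The mean `χ = Σ k·p_k` of a flip distribution. -/
noncomputable def FlipDist.mean {n : ℕ} (D : FlipDist n) : ℝ :=
  ∑ k ∈ Finset.range (n+1), (k : ℝ) * D.p k

/-- `mutP D x y` is the probability that `mut_D(x) = y`: sample `k ∼ D`, then flip a
uniformly random set of exactly `k` positions.  Exactly one `k`-set maps `x` to `y`,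
namely when `k` is the Hamming distance. -/
noncomputable def mutP {n : ℕ} (D : FlipDist n) (x y : Point n) : ℝ :=
  D.p (hamming x y) / (Nat.choose n (hamming x y) : ℝ)

/-- `x` is a global maximum of `f`. -/
def isOpt {n : ℕ} (f : Point n → ℝ) (x : Point n) : Prop := ∀ y, f y ≤ f x

/-- One-step transition probability of the elitist (1+1)-EA_D maximizing `f`. -/
noncomputable def eaStep {n : ℕ} (D : FlipDist n) (f : Point n → ℝ) (x y : Point n) : ℝ :=
  (if f x ≤ f y then mutP D x y else 0) +
  (if y = x then ∑ z ∈ Finset.univ.filter (fun z => f z < f x), mutP D x z else 0)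

/-- Distribution of the current search point `x^(t)` of the (1+1)-EA_D maximizing `f`,
with initial distribution `init`. -/
noncomputable def eaDist {n : ℕ} (D : FlipDist n) (f : Point n → ℝ)
    (init : Point n → ℝ) : ℕ → Point n → ℝ
  | 0 => init
  | t+1 => fun y => ∑ x : Point n, eaDist D f init t x * eaStep D f x y

/-- `survival D f init t = Pr[T > t]`: since the set of global maxima is absorbing for the
elitist chain, this is the probability that `x^(t)` is not a global maximum of `f`. -/
noncomputable def survival {n : ℕ} (D : FlipDist n) (f : Point n → ℝ)
    (init : Point n → ℝ) (t : ℕ) : ℝ :=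
  ∑ x ∈ Finset.univ.filter (fun x => ¬ isOpt f x), eaDist D f init t x

/-- Expected runtime `E[T] = Σ_{t≥0} Pr[T > t]` of the (1+1)-EA_D on `f`. -/
noncomputable def expRuntime {n : ℕ} (D : FlipDist n) (f : Point n → ℝ)
    (init : Point n → ℝ) : ℝ≥0∞ :=
  ∑' t : ℕ, ENNReal.ofReal (survival D f init t)

/-- The uniform initial distribution on `{0,1}^n`. -/
noncomputable def uniformInit (n : ℕ) : Point n → ℝ := fun _ => ((2:ℝ)^n)⁻¹

/-- The linear function `f(x) = Σ w_i x_i`. -/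
noncomputable def linF {n : ℕ} (w : Fin n → ℝ) : Point n → ℝ :=
  fun x => ∑ i : Fin n, w i * (if x i then 1 else 0)

/-- `dOf x = min(OM(x), n − OM(x))`. -/
def dOf {n : ℕ} (x : Point n) : ℕ := min (OM x) (n - OM x)

/-- `B(n,d,r) = Σ_{i=max(⌈r/2⌉, r+d−n)}^{min(d,r)} (2i−r)·C(d,i)·C(n−d,r−i)/C(n,r)`. -/
noncomputable def B (n d r : ℕ) : ℝ :=
  ∑ i ∈ Finset.Icc (max ((r+1)/2) (r + d - n)) (min d r),
    ((2*i - r : ℕ) : ℝ) * (Nat.choose d i : ℝ) * (Nat.choose (n-d) (r-i) : ℝ) /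
      (Nat.choose n r : ℝ)

/-- `h̃(d) = Σ_{r=1}^{n−1} (p_r + p_{n−r})·B(n,d,r)`. -/
noncomputable def htilde {n : ℕ} (D : FlipDist n) (d : ℕ) : ℝ :=
  ∑ r ∈ Finset.Icc 1 (n-1), (D.p r + D.p (n-r)) * B n d r

/-- `d_0 = ⌊(p_1 + p_{n−1})·n/(ln n)²⌋`. -/
noncomputable def d0 {n : ℕ} (D : FlipDist n) : ℕ :=
  ⌊(D.p 1 + D.p (n-1)) * n / (Real.log n)^2⌋₊

/-- `h(d) = h̃(d)` for `d ≤ d_0`, and `h(d) = n` for `d > d_0`. -/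
noncomputable def hfun {n : ℕ} (D : FlipDist n) (d : ℕ) : ℝ :=
  if d ≤ d0 D then htilde D d else n


/-- choose is at most 2^r -/
lemma aux_choose_le_two_pow (r i : ℕ) : r.choose i ≤ 2 ^ r := by
  rcases le_or_gt i r with h | h
  · calc r.choose i ≤ ∑ m ∈ Finset.range (r+1), r.choose m :=
        Finset.single_le_sum (f := fun m => r.choose m) (fun _ _ => Nat.zero_le _)
          (Finset.mem_range.mpr (Nat.lt_succ_of_le h))
    _ = 2 ^ r := Nat.sum_range_choose r
  · rw [Nat.choose_eq_zero_of_lt h]; exact Nat.zero_le _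

/-- descending ratio bound for binomials -/
lemma aux_choose_desc (n d : ℕ) : ∀ i : ℕ, i ≤ d →
    n.choose (d - i) * (n - d) ^ i ≤ n.choose d * d ^ i := by
  intro i
  induction i with
  | zero => simp
  | succ i ih =>
    intro hid
    have hi : i ≤ d := by omega
    have key : n.choose (d - (i+1)) * (n - d) ≤ n.choose (d - i) * d := by
      have hk : d - i = (d - (i+1)) + 1 := by omega
      have h2 := Nat.choose_succ_right_eq n (d - (i+1))
      -- n.choose (d-(i+1)+1) * (d-(i+1)+1) = n.choose (d-(i+1)) * (n - (d-(i+1)))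
      calc n.choose (d - (i+1)) * (n - d)
          ≤ n.choose (d - (i+1)) * (n - (d - (i+1))) :=
            Nat.mul_le_mul_left _ (Nat.sub_le_sub_left (Nat.sub_le d (i+1)) n)
        _ = n.choose (d - (i+1) + 1) * (d - (i+1) + 1) := h2.symm
        _ = n.choose (d - i) * (d - i) := by rw [← hk]
        _ ≤ n.choose (d - i) * d := Nat.mul_le_mul_left _ (Nat.sub_le d i)
    calc n.choose (d - (i+1)) * (n - d) ^ (i+1)
        = (n.choose (d - (i+1)) * (n - d)) * (n - d) ^ i := by ring
      _ ≤ (n.choose (d - i) * d) * (n - d) ^ i := Nat.mul_le_mul_right _ key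
      _ = d * (n.choose (d - i) * (n - d) ^ i) := by ring
      _ ≤ d * (n.choose d * d ^ i) := Nat.mul_le_mul_left _ (ih hi)
      _ = n.choose d * d ^ (i+1) := by ring

/-- hypergeometric symmetry identity -/
lemma aux_choose_id (n d r i : ℕ) (hid : i ≤ d) (hir : i ≤ r) (hdr : d + r ≤ n + i) :
    (d.choose i : ℝ) * ((n-d).choose (r-i) : ℝ) * (n.choose d : ℝ) =
    (r.choose i : ℝ) * ((n-r).choose (d-i) : ℝ) * (n.choose r : ℝ) := by
  have h1 : r - i ≤ n - d := by omega
  have h2 : d ≤ n := by omega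
  have h3 : d - i ≤ n - r := by omega
  have h4 : r ≤ n := by omega
  have h5 : n - d - (r - i) = n - r - (d - i) := by omega
  rw [Nat.cast_choose ℝ hid, Nat.cast_choose ℝ h1, Nat.cast_choose ℝ h2,
    Nat.cast_choose ℝ hir, Nat.cast_choose ℝ h3, Nat.cast_choose ℝ h4, h5]
  have f0 : ∀ m : ℕ, ((Nat.factorial m : ℕ) : ℝ) ≠ 0 :=
    fun m => Nat.cast_ne_zero.mpr (Nat.factorial_ne_zero m)
  field_simp [f0]

/-- geometric-type sum bound -/
lemma aux_geom (x : ℝ) (h0 : 0 ≤ x) (h2 : x ≤ 1/2) :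
    ∀ N : ℕ, ∑ k ∈ Finset.range N, (2*(k:ℝ)+4)*x^k ≤ 12 - (4*(N:ℝ)+12)*x^N := by
  intro N
  induction N with
  | zero => simp
  | succ N ih =>
    rw [Finset.sum_range_succ]
    have hxN : (0:ℝ) ≤ x^N := pow_nonneg h0 N
    have key : (4*((N:ℝ)+1)+12)*x^(N+1) ≤ (2*(N:ℝ)+8)*x^N := by
      rw [pow_succ]
      have hN0 : (0:ℝ) ≤ (N:ℝ) := Nat.cast_nonneg N
      have hx1 : (4*(N:ℝ)+16)*x ≤ 2*(N:ℝ)+8 := by nlinarith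
      calc (4*((N:ℝ)+1)+12)*(x^N*x) = ((4*(N:ℝ)+16)*x)*x^N := by ring
        _ ≤ (2*(N:ℝ)+8)*x^N := mul_le_mul_of_nonneg_right hx1 hxN
    push_cast
    nlinarith

lemma aux_sum_ico (x : ℝ) (h0 : 0 ≤ x) (h2 : x ≤ 1/2) (N : ℕ) :
    ∑ i ∈ Finset.Ico 2 N, 2*(i:ℝ)*x^i ≤ 12*x^2 := by
  rw [Finset.sum_Ico_eq_sum_range]
  have he : ∀ k ∈ Finset.range (N-2), 2*((2+k:ℕ):ℝ)*x^(2+k) = x^2 * ((2*(k:ℝ)+4)*x^k) := by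
    intro k _
    push_cast
    rw [pow_add]
    ring
  rw [Finset.sum_congr rfl he, ← Finset.mul_sum]
  have h12 : ∑ k ∈ Finset.range (N-2), (2*(k:ℝ)+4)*x^k ≤ 12 := by
    have := aux_geom x h0 h2 (N-2)
    nlinarith [pow_nonneg h0 (N-2), Nat.cast_nonneg (α := ℝ) (N-2)]
  nlinarith [sq_nonneg x]

lemma aux_B_le (n d r : ℕ) (hd1 : 1 ≤ d) (h16 : 16 * d ≤ n) (hr2 : 2 ≤ r) :
    B n d r ≤ 768 * (d:ℝ)^2 / (n:ℝ)^2 := by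
  have hn0 : 0 < n := by omega
  have hnR : (0:ℝ) < n := by exact_mod_cast hn0
  have h16R : 16*(d:ℝ) ≤ n := by exact_mod_cast h16
  have hdR : (1:ℝ) ≤ (d:ℝ) := by exact_mod_cast hd1
  set x : ℝ := 8*(d:ℝ)/n with hxdef
  have hx0 : 0 ≤ x := by positivity
  have hx2 : x ≤ 1/2 := by
    rw [hxdef, div_le_iff₀ hnR]; linarith
  have hndpos : (0:ℝ) < (n:ℝ) - d := by linarith
  have hstep : ∀ i ∈ Finset.Icc (max ((r+1)/2) (r + d - n)) (min d r),
      ((2*i - r : ℕ) : ℝ) * (Nat.choose d i : ℝ) * (Nat.choose (n-d) (r-i) : ℝ) /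
        (Nat.choose n r : ℝ) ≤ (if 2 ≤ i then 2*(i:ℝ)*x^i else 0) := by
    intro i hi
    rw [Finset.mem_Icc] at hi
    obtain ⟨hlo, hhi⟩ := hi
    have hid : i ≤ d := le_trans hhi (min_le_left _ _)
    have hir : i ≤ r := le_trans hhi (min_le_right _ _)
    by_cases h2i : 2*i ≤ r
    · have hz : 2*i - r = 0 := by omega
      rw [hz]
      have hnn : (0:ℝ) ≤ (if 2 ≤ i then 2*(i:ℝ)*x^i else 0) := by
        split <;> positivity
      simpa using hnn
    · push_neg at h2i
      have hi2 : 2 ≤ i := by omega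
      rw [if_pos hi2]
      have hdr : d + r ≤ n + i := by omega
      have hrn : r ≤ n := by omega
      have hCnr : (0:ℝ) < (Nat.choose n r : ℝ) := by exact_mod_cast Nat.choose_pos hrn
      have hCnd : (0:ℝ) < (Nat.choose n d : ℝ) := by
        exact_mod_cast Nat.choose_pos (by omega : d ≤ n)
      have hident := aux_choose_id n d r i hid hir hdr
      set td : ℝ := (d:ℝ)/((n:ℝ)-d) with htddef
      have htd0 : 0 ≤ td := by positivity
      -- b3 : C(n-r, d-i) ≤ C(n,d)·td^i
      have hcast : ((n - d:ℕ):ℝ) = (n:ℝ) - d := by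
        exact_mod_cast Nat.cast_sub (by omega : d ≤ n)
      have b3 : ((n-r).choose (d-i) : ℝ) ≤ (Nat.choose n d : ℝ) * td^i := by
        have m1 : ((n-r).choose (d-i) : ℝ) ≤ (n.choose (d-i) : ℝ) := by
          exact_mod_cast Nat.choose_le_choose (d-i) (Nat.sub_le n r)
        have m2 : (n.choose (d-i) : ℝ) * ((n:ℝ)-(d:ℝ))^i ≤ (n.choose d : ℝ) * (d:ℝ)^i := by
          have h := aux_choose_desc n d i hid
          have h' : ((n.choose (d-i) * (n-d)^i : ℕ):ℝ) ≤ ((n.choose d * d^i : ℕ):ℝ) :=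
            Nat.cast_le.mpr h
          push_cast at h'
          rw [hcast] at h'
          exact h'
        have m3 : (n.choose (d-i):ℝ) ≤ (n.choose d : ℝ) * (d:ℝ)^i / ((n:ℝ)-(d:ℝ))^i := by
          rw [le_div_iff₀ (pow_pos hndpos i)]
          exact m2
        have m4 : (n.choose d : ℝ) * (d:ℝ)^i / ((n:ℝ)-(d:ℝ))^i = (n.choose d : ℝ) * td^i := by
          rw [htddef, div_pow]; ring
        linarith [m1, m3, m4.le, m4.ge]
      have e : ((2*i - r : ℕ):ℝ) * (d.choose i : ℝ) * ((n-d).choose (r-i) : ℝ) / (n.choose r : ℝ)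
             = ((2*i - r : ℕ):ℝ) * (r.choose i : ℝ) * ((n-r).choose (d-i) : ℝ) / (n.choose d : ℝ) := by
        rw [div_eq_div_iff (ne_of_gt hCnr) (ne_of_gt hCnd)]
        linear_combination ((2*i - r : ℕ):ℝ) * hident
      rw [e, div_le_iff₀ hCnd]
      have b1 : ((2*i - r:ℕ):ℝ) ≤ 2*(i:ℝ) := by
        have : (2*i - r:ℕ) ≤ 2*i := by omega
        exact_mod_cast this
      have b2 : (r.choose i : ℝ) ≤ 4^i := by
        have h1 : r.choose i ≤ 2^r := aux_choose_le_two_pow r i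
        have h2 : (2:ℕ)^r ≤ 2^(2*i) := Nat.pow_le_pow_right (by norm_num) (by omega)
        have h3 : (2:ℕ)^(2*i) = 4^i := by rw [pow_mul]; norm_num
        exact_mod_cast le_trans h1 (h3 ▸ h2)
      have h4td : 4*td ≤ x := by
        rw [htddef, hxdef, mul_div_assoc' 4, div_le_div_iff₀ hndpos hnR]
        nlinarith
      calc ((2*i - r : ℕ):ℝ) * (r.choose i : ℝ) * ((n-r).choose (d-i) : ℝ)
          ≤ (2*(i:ℝ)) * 4^i * ((Nat.choose n d : ℝ) * td^i) := by
            apply mul_le_mul (mul_le_mul b1 b2 (by positivity) (by positivity)) b3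
              (by positivity) (by positivity)
        _ = (Nat.choose n d : ℝ) * ((2*(i:ℝ)) * (4*td)^i) := by rw [mul_pow]; ring
        _ ≤ (Nat.choose n d : ℝ) * ((2*(i:ℝ)) * x^i) := by
            gcongr
        _ = 2*(i:ℝ)*x^i * (Nat.choose n d : ℝ) := by ring
  have step2 := Finset.sum_le_sum hstep
  have step3 : ∑ i ∈ Finset.Icc (max ((r+1)/2) (r + d - n)) (min d r),
      (if 2 ≤ i then 2*(i:ℝ)*x^i else 0)
      ≤ ∑ i ∈ Finset.range (min d r + 1), (if 2 ≤ i then 2*(i:ℝ)*x^i else 0) := by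
    apply Finset.sum_le_sum_of_subset_of_nonneg
    · intro z hz
      rw [Finset.mem_Icc] at hz
      rw [Finset.mem_range]
      omega
    · intro z _ _
      split <;> positivity
  have step4 : ∑ i ∈ Finset.range (min d r + 1), (if 2 ≤ i then 2*(i:ℝ)*x^i else 0)
      = ∑ i ∈ Finset.Ico 2 (min d r + 1), 2*(i:ℝ)*x^i := by
    rw [← Finset.sum_filter]
    congr 1
    ext z
    simp only [Finset.mem_filter, Finset.mem_range, Finset.mem_Ico]
    omega
  have step5 := aux_sum_ico x hx0 hx2 (min d r + 1)
  have step6 : 12*x^2 = 768*(d:ℝ)^2/(n:ℝ)^2 := by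
    rw [hxdef, div_pow]; ring
  unfold B
  linarith [step2, step3, step4.le, step4.ge, step5]

/-- There exists `n₀` such that for all `n ≥ n₀`, every flip
distribution `D`, and every `d` with `1 ≤ d ≤ d₀`, it holds that
`h(d) ≤ (1 + 1/ln n)·(p₁ + p_{n−1})·d/n`. -/
theorem stmt15 :
    ∃ n0 : ℕ, ∀ n : ℕ, n0 ≤ n → ∀ D : FlipDist n, ∀ d : ℕ, 1 ≤ d → d ≤ d0 D →
      hfun D d ≤ (1 + 1 / Real.log n) * (D.p 1 + D.p (n-1)) * d / n := by
  use ⌈Real.exp 1536⌉₊ + 3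
  intro n hn D d hd1 hdd0
  have hn3 : 3 ≤ n := by omega
  have hnR : (0:ℝ) < n := by exact_mod_cast (by omega : 0 < n)
  have hL : (1536:ℝ) ≤ Real.log n := by
    rw [Real.le_log_iff_exp_le hnR]
    calc Real.exp 1536 ≤ (⌈Real.exp 1536⌉₊ : ℝ) := Nat.le_ceil _
      _ ≤ (n:ℝ) := by exact_mod_cast (by omega : ⌈Real.exp 1536⌉₊ ≤ n)
  have hL0 : (0:ℝ) < Real.log n := by linarith
  set L := Real.log n with hLdef
  set c := D.p 1 + D.p (n-1) with hcdef
  have hc0 : 0 ≤ c := add_nonneg (D.nonneg 1) (D.nonneg (n-1))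
  have hc1 : c ≤ 1 := by
    have hsub : ({1, n-1} : Finset ℕ) ⊆ Finset.range (n+1) := by
      intro x hx
      simp only [Finset.mem_insert, Finset.mem_singleton] at hx
      rw [Finset.mem_range]
      omega
    have h := Finset.sum_le_sum_of_subset_of_nonneg hsub (fun k _ _ => D.nonneg k)
    rw [D.sum_eq, Finset.sum_pair (by omega : 1 ≠ n-1)] at h
    exact h
  have hdR1 : (1:ℝ) ≤ d := by exact_mod_cast hd1
  have hdreal : (d:ℝ) ≤ c * n / L^2 := by
    calc (d:ℝ) ≤ (d0 D : ℝ) := by exact_mod_cast hdd0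
      _ ≤ c * n / L^2 := Nat.floor_le (by positivity)
  have hkey : (d:ℝ) * L^2 ≤ c * n := by
    rw [le_div_iff₀ (by positivity : (0:ℝ) < L^2)] at hdreal
    exact hdreal
  have hcn : c * n ≤ n := by nlinarith
  have hL2 : (16:ℝ) ≤ L^2 := by nlinarith
  have h16R : 16 * (d:ℝ) ≤ n := by nlinarith
  have h16 : 16 * d ≤ n := by exact_mod_cast h16R
  -- unfold hfun
  rw [hfun, if_pos hdd0, htilde]
  have hsplit : Finset.Icc 1 (n-1) = insert 1 (Finset.Icc 2 (n-1)) := by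
    ext z
    simp only [Finset.mem_Icc, Finset.mem_insert]
    omega
  rw [hsplit, Finset.sum_insert (by simp)]
  -- B n d 1 = d / n
  have hB1 : B n d 1 = (d:ℝ)/n := by
    rw [B]
    have e1 : max ((1+1)/2) (1 + d - n) = 1 := by
      have : 1 + d - n ≤ 1 := by omega
      omega
    have e2 : min d 1 = 1 := min_eq_right hd1
    rw [e1, e2, Finset.Icc_self, Finset.sum_singleton]
    norm_num [Nat.choose_one_right]
  -- tail bound
  have hsumA : ∑ r ∈ Finset.Icc 2 (n-1), D.p r ≤ 1 := by
    rw [← D.sum_eq]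
    apply Finset.sum_le_sum_of_subset_of_nonneg
    · intro z hz; rw [Finset.mem_Icc] at hz; rw [Finset.mem_range]; omega
    · exact fun k _ _ => D.nonneg k
  have hsumB : ∑ r ∈ Finset.Icc 2 (n-1), D.p (n - r) ≤ 1 := by
    have hinj : ∀ a ∈ Finset.Icc 2 (n-1), ∀ b ∈ Finset.Icc 2 (n-1),
        n - a = n - b → a = b := by
      intro a ha b hb hab
      rw [Finset.mem_Icc] at ha hb
      omega
    have himg : ∑ z ∈ (Finset.Icc 2 (n-1)).image (fun r => n - r), D.p z
        = ∑ r ∈ Finset.Icc 2 (n-1), D.p (n - r) := Finset.sum_image hinj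
    rw [← himg, ← D.sum_eq]
    apply Finset.sum_le_sum_of_subset_of_nonneg
    · intro z hz
      rw [Finset.mem_image] at hz
      obtain ⟨a, ha, rfl⟩ := hz
      rw [Finset.mem_Icc] at ha
      rw [Finset.mem_range]
      omega
    · exact fun k _ _ => D.nonneg k
  have htail : ∑ r ∈ Finset.Icc 2 (n-1), (D.p r + D.p (n-r)) * B n d r
      ≤ 1536 * (d:ℝ)^2 / (n:ℝ)^2 := by
    have hKnn : (0:ℝ) ≤ 768 * (d:ℝ)^2 / (n:ℝ)^2 := by positivity
    calc ∑ r ∈ Finset.Icc 2 (n-1), (D.p r + D.p (n-r)) * B n d r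
        ≤ ∑ r ∈ Finset.Icc 2 (n-1), (D.p r + D.p (n-r)) * (768 * (d:ℝ)^2 / (n:ℝ)^2) := by
          apply Finset.sum_le_sum
          intro r hr
          rw [Finset.mem_Icc] at hr
          exact mul_le_mul_of_nonneg_left (aux_B_le n d r hd1 h16 hr.1)
            (add_nonneg (D.nonneg r) (D.nonneg (n-r)))
      _ = (∑ r ∈ Finset.Icc 2 (n-1), (D.p r + D.p (n-r))) * (768 * (d:ℝ)^2 / (n:ℝ)^2) :=
          (Finset.sum_mul _ _ _).symm
      _ ≤ 2 * (768 * (d:ℝ)^2 / (n:ℝ)^2) := by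
          apply mul_le_mul_of_nonneg_right _ hKnn
          rw [Finset.sum_add_distrib]
          linarith
      _ = 1536 * (d:ℝ)^2 / (n:ℝ)^2 := by ring
  -- final arithmetic
  have h9 : 1536 * (d:ℝ)^2 / (n:ℝ)^2 ≤ c * d / (n * L) := by
    rw [div_le_div_iff₀ (by positivity) (by positivity)]
    have e1 : (d:ℝ)*L^2*((d:ℝ)*n) ≤ c*n*((d:ℝ)*n) :=
      mul_le_mul_of_nonneg_right hkey (by positivity)
    have e2 : 1536*(d:ℝ)^2*((n:ℝ)*L) ≤ (d:ℝ)*L^2*((d:ℝ)*n) := by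
      nlinarith [mul_nonneg (mul_nonneg (mul_nonneg (sq_nonneg (d:ℝ)) hnR.le) hL0.le)
        (by linarith : (0:ℝ) ≤ L - 1536)]
    nlinarith [e1, e2]
  have hexp : (1 + 1/L) * c * (d:ℝ) / n = c * ((d:ℝ)/n) + c * d / (n * L) := by
    field_simp
  rw [hB1, hexp]
  have : c * ((d:ℝ)/n) ≤ c * ((d:ℝ)/n) := le_refl _
  linarith [htail, h9]
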